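/- Let f satisfy (A1)-(A2), the contraction/same-side condition with constant λ ∈ (0,1), and liminf_{x→∞}(x − f(x)) > 0; let (γ_n) be a real sequence with lim_{n→∞} γ_n = 0. Let (x_n) be the solution of x_{n+1} = max{f(x_n) + γ_{n+1}, 0} with arbitrary initial value x_0 > 0, and suppose σ₁ > 0 is such that limsup_{n→∞} x_n ≥ σ₁. Then there exist ε₀ > 0 satisfying ε₀ < min{λK, (1−λ)K/2} and n₀ ∈ ℕ such that x_n ∈ [ε₀, 2K−ε₀] for every n ≥ n₀. -/

import Mathlib

set_option maxHeartbeats 1600000 in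
/-- Lemma `lem:add3`: if `limsup x_n ≥ σ₁ > 0`, the solution eventually stays in `[ε₀, 2K - ε₀]`. -/
theorem stmt_2 (f : ℝ → ℝ) (K lam : ℝ)
    (hf_cont : ContinuousOn f (Set.Ici 0))
    (hf_maps : ∀ x : ℝ, 0 ≤ x → 0 ≤ f x)
    (hf0 : f 0 = 0)
    (hf_pos : ∀ x : ℝ, 0 < x → 0 < f x)
    (hK : 0 < K) (hfK : f K = K)
    (hbelow : ∀ x : ℝ, 0 < x → x < K → x < f x)
    (habove : ∀ x : ℝ, K < x → f x < x)
    (hlam : lam ∈ Set.Ioo (0 : ℝ) 1)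
    (hcontr : ∀ x : ℝ, 0 < x →
      |f x - K| ≤ lam * |x - K| ∨ 0 < (f x - K) * (x - K))
    (hliminf : 0 < Filter.liminf (fun y : ℝ => y - f y) Filter.atTop)
    (γ : ℕ → ℝ) (hγ : Filter.Tendsto γ Filter.atTop (nhds 0))
    (x : ℕ → ℝ) (hx0 : 0 < x 0)
    (hrec : ∀ n : ℕ, x (n + 1) = max (f (x n) + γ (n + 1)) 0)
    (σ₁ : ℝ) (hσ₁ : 0 < σ₁)
    (hlimsup : σ₁ ≤ Filter.limsup x Filter.atTop) :
    ∃ ε₀ : ℝ, 0 < ε₀ ∧ ε₀ < min (lam * K) ((1 - lam) * K / 2) ∧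
      ∃ n₀ : ℕ, ∀ n ≥ n₀, x n ∈ Set.Icc ε₀ (2 * K - ε₀) := by
  obtain ⟨hlam0, hlam1⟩ := hlam
  have hlamK : 0 < lam * K := mul_pos hlam0 hK
  have hlamK' : 0 < (1 - lam) * K := mul_pos (by linarith) hK
  -- nonnegativity of the orbit
  have hxnn : ∀ n, 0 ≤ x n := by
    intro n
    cases n with
    | zero => exact hx0.le
    | succ m => rw [hrec m]; exact le_max_right _ _
  -- extract c > 0 with eventually c ≤ y - f y
  have hc : ∃ c, 0 < c ∧ ∀ᶠ y in Filter.atTop, c ≤ y - f y := by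
    rw [Filter.liminf_eq] at hliminf
    by_contra h
    push_neg at h
    have h2 : sSup { a | ∀ᶠ y in Filter.atTop, a ≤ y - f y } ≤ 0 :=
      Real.sSup_le (fun a ha => le_of_not_gt fun hpos => (h a hpos) (ha.mono fun y hy => not_lt.mpr hy)) le_rfl
    exact absurd (hliminf.trans_le h2) (lt_irrefl 0)
  obtain ⟨c, hcpos, hcev⟩ := hc
  obtain ⟨M₀, hM₀⟩ := Filter.eventually_atTop.mp hcev
  set M : ℝ := max M₀ 1 with hMdef
  have hM1 : (1:ℝ) ≤ M := le_max_right _ _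
  have hMnn : (0:ℝ) ≤ M := le_trans zero_le_one hM1
  have hfar : ∀ y : ℝ, M ≤ y → f y ≤ y - c := by
    intro y hy
    have := hM₀ y (le_trans (le_max_left _ _) hy)
    linarith
  -- bound of f on [0, M]
  obtain ⟨C, hC⟩ := (isCompact_Icc (a := (0:ℝ)) (b := M)).exists_bound_of_continuousOn
    (hf_cont.mono (Set.Icc_subset_Ici_self))
  have hCnn : 0 ≤ C := le_trans (norm_nonneg _) (hC 0 ⟨le_rfl, hMnn⟩)
  have hCle : ∀ y : ℝ, 0 ≤ y → y ≤ M → f y ≤ C := by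
    intro y h1 h2
    have := hC y ⟨h1, h2⟩
    rw [Real.norm_eq_abs] at this
    exact le_trans (le_abs_self _) this
  set B : ℝ := max (C + c) (2 * K) with hBdef
  have hB2K : 2 * K ≤ B := le_max_right _ _
  have hBCc : C + c ≤ B := le_max_left _ _
  have hBpos : 0 < B := lt_of_lt_of_le (by linarith) hB2K
  -- choose ε₀
  set ε₀ : ℝ := min (min (lam * K) ((1 - lam) * K / 2)) σ₁ / 4 with hedef
  have hε₀pos : 0 < ε₀ := by
    have : 0 < min (min (lam * K) ((1 - lam) * K / 2)) σ₁ :=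
      lt_min (lt_min hlamK (by linarith)) hσ₁
    rw [hedef]; linarith
  have hε₀lamK : ε₀ ≤ lam * K / 4 := by
    have : min (min (lam * K) ((1 - lam) * K / 2)) σ₁ ≤ lam * K :=
      le_trans (min_le_left _ _) (min_le_left _ _)
    rw [hedef]; linarith
  have hε₀lamK2 : ε₀ ≤ (1 - lam) * K / 8 := by
    have : min (min (lam * K) ((1 - lam) * K / 2)) σ₁ ≤ (1 - lam) * K / 2 :=
      le_trans (min_le_left _ _) (min_le_right _ _)
    rw [hedef]; linarith
  have hε₀σ : ε₀ ≤ σ₁ / 4 := by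
    have : min (min (lam * K) ((1 - lam) * K / 2)) σ₁ ≤ σ₁ := min_le_right _ _
    rw [hedef]; linarith
  have hε₀K : ε₀ ≤ K / 2 := by linarith
  have hε₀lt : ε₀ < min (lam * K) ((1 - lam) * K / 2) := by
    rcases le_total (lam * K) ((1 - lam) * K / 2) with h | h
    · rw [min_eq_left h]; linarith
    · rw [min_eq_right h]; linarith
  -- f ≤ (1+lam) K on [0, K]
  have hfupK : ∀ y : ℝ, 0 ≤ y → y ≤ K → f y ≤ (1 + lam) * K := by
    intro y h1 h2
    rcases eq_or_lt_of_le h1 with rfl | h1'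
    · rw [hf0]; linarith
    rcases eq_or_lt_of_le h2 with rfl | h2'
    · rw [hfK]; linarith
    rcases hcontr y h1' with h | h
    · have hyK : |y - K| = K - y := by
        rw [abs_of_nonpos (by linarith)]; ring
      rw [hyK] at h
      have h3 := (abs_le.mp h).2
      have h4 : lam * (K - y) ≤ lam * K :=
        mul_le_mul_of_nonneg_left (by linarith) hlam0.le
      linarith
    · have hfy : f y < K := by
        by_contra hge
        push_neg at hge
        have : (f y - K) * (y - K) ≤ 0 :=
          mul_nonpos_of_nonneg_of_nonpos (by linarith) (by linarith)
        linarith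
      linarith
  -- f ≥ (1-lam) K on (K, 2K - ε₀]
  have hflow2 : ∀ y : ℝ, K < y → y ≤ 2 * K - ε₀ → (1 - lam) * K ≤ f y := by
    intro y h1 h2
    rcases hcontr y (lt_trans hK h1) with h | h
    · have hyK : |y - K| = y - K := abs_of_pos (by linarith)
      rw [hyK] at h
      have h3 := (abs_le.mp h).1
      have h4 : lam * (y - K) ≤ lam * K :=
        mul_le_mul_of_nonneg_left (by linarith) hlam0.le
      linarith
    · have hfy : K < f y := by
        by_contra hge
        push_neg at hge
        have : (f y - K) * (y - K) ≤ 0 :=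
          mul_nonpos_of_nonpos_of_nonneg (by linarith) (by linarith)
        linarith
      linarith
  -- uniform decrease δ on [K + ε₀, B]
  have hKeB : K + ε₀ ≤ B := by linarith
  obtain ⟨z, hz, hzmin'⟩ := (isCompact_Icc (a := K + ε₀) (b := B)).exists_isMinOn
    ⟨K + ε₀, le_rfl, hKeB⟩
    ((continuous_id.continuousOn).sub (hf_cont.mono (fun y hy =>
      le_trans (by linarith : (0:ℝ) ≤ K + ε₀) hy.1)))
  have hzmin := isMinOn_iff.mp hzmin'
  set δ : ℝ := z - f z with hδdef
  have hδpos : 0 < δ := by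
    have : f z < z := habove z (by linarith [hz.1])
    linarith
  have hδdec : ∀ y : ℝ, K + ε₀ ≤ y → y ≤ B → f y ≤ y - δ := by
    intro y h1 h2
    have := hzmin y ⟨h1, h2⟩
    simp only [Pi.sub_apply, id] at this
    linarith
  -- uniform lower bound μ on [ε₀, K]
  obtain ⟨w, hw, hwmin'⟩ := (isCompact_Icc (a := ε₀) (b := K)).exists_isMinOn
    ⟨ε₀, le_rfl, by linarith⟩
    (hf_cont.mono (fun y hy => le_trans hε₀pos.le hy.1))
  have hwmin := isMinOn_iff.mp hwmin'
  set μ : ℝ := f w with hμdef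
  have hμgt : ε₀ < μ := by
    rcases eq_or_lt_of_le hw.2 with h | h
    · rw [hμdef, h, hfK]; linarith
    · have := hbelow w (lt_of_lt_of_le hε₀pos hw.1) h
      rw [hμdef]; linarith [hw.1]
  have hμle : ∀ y : ℝ, ε₀ ≤ y → y ≤ K → μ ≤ f y := fun y h1 h2 => hwmin y ⟨h1, h2⟩
  -- γ threshold
  set g₀ : ℝ := min (min (c / 2) (δ / 2)) (min ((μ - ε₀) / 2) ((1 - lam) * K / 4))
    with hg₀def
  have hg₀pos : 0 < g₀ :=
    lt_min (lt_min (by linarith) (by linarith)) (lt_min (by linarith) (by linarith))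
  have hg₀c : g₀ ≤ c / 2 := le_trans (min_le_left _ _) (min_le_left _ _)
  have hg₀δ : g₀ ≤ δ / 2 := le_trans (min_le_left _ _) (min_le_right _ _)
  have hg₀μ : g₀ ≤ (μ - ε₀) / 2 := le_trans (min_le_right _ _) (min_le_left _ _)
  have hg₀lam : g₀ ≤ (1 - lam) * K / 4 := le_trans (min_le_right _ _) (min_le_right _ _)
  obtain ⟨N₀, hN₀⟩ := (Metric.tendsto_atTop.mp hγ) g₀ hg₀pos
  have hγsmall : ∀ n ≥ N₀, |γ n| ≤ g₀ := by
    intro n hn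
    have := hN₀ n hn
    rw [Real.dist_eq, sub_zero] at this
    exact this.le
  -- basic step bounds
  have hstepup : ∀ n ≥ N₀, x (n + 1) ≤ max (f (x n) + g₀) 0 := by
    intro n hn
    rw [hrec n]
    have h1 : γ (n + 1) ≤ g₀ := le_trans (le_abs_self _) (hγsmall (n+1) (by omega))
    exact max_le_max (by linarith) le_rfl
  have hstepdown : ∀ n ≥ N₀, f (x n) - g₀ ≤ x (n + 1) := by
    intro n hn
    rw [hrec n]
    have h1 : -g₀ ≤ γ (n + 1) := by
      have h2 := hγsmall (n+1) (by omega)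
      have h3 := neg_abs_le (γ (n+1))
      linarith
    exact le_trans (by linarith) (le_max_left _ _)
  -- eventual upper bound by B
  have hdrop : ∀ n ≥ N₀, x (n + 1) ≤ max B (x n - c / 2) := by
    intro n hn
    have h := hstepup n hn
    rcases le_total (x n) M with hxM | hxM
    · have hf1 : f (x n) ≤ C := hCle (x n) (hxnn n) hxM
      have h2 : max (f (x n) + g₀) 0 ≤ B := max_le (by linarith) hBpos.le
      exact le_trans h (le_trans h2 (le_max_left _ _))
    · have hf1 : f (x n) ≤ x n - c := hfar (x n) hxM
      have h2 : max (f (x n) + g₀) 0 ≤ max (x n - c / 2) 0 :=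
        max_le_max (by linarith) le_rfl
      refine le_trans h (le_trans h2 ?_)
      exact max_le (le_max_right _ _) (le_trans hBpos.le (le_max_left _ _))
  have hBinv : ∀ n ≥ N₀, x n ≤ B → x (n + 1) ≤ B := by
    intro n hn hxB
    have h1 := hdrop n hn
    have h2 : max B (x n - c / 2) ≤ B := max_le le_rfl (by linarith)
    linarith
  -- descent to below B
  have hchain : ∀ k : ℕ, x (N₀ + k) ≤ max B (x N₀ - k * (c / 2)) := by
    intro k
    induction k with
    | zero => simp
    | succ k ih =>
      have h1 := hdrop (N₀ + k) (by omega)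
      have h2 : max B (x (N₀ + k) - c / 2) ≤ max B (x N₀ - (k + 1 : ℕ) * (c / 2)) := by
        apply max_le (le_max_left _ _)
        have h3 : x (N₀ + k) - c / 2 ≤ max B (x N₀ - k * (c/2)) - c / 2 := by linarith
        refine le_trans h3 ?_
        rcases max_cases B (x N₀ - k * (c/2)) with ⟨h, _⟩ | ⟨h, _⟩
        · rw [h]; exact le_trans (by linarith) (le_max_left _ _)
        · rw [h]
          refine le_trans ?_ (le_max_right _ _)
          push_cast
          linarith
      calc x (N₀ + (k + 1)) = x ((N₀ + k) + 1) := by ring_nf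
        _ ≤ max B (x (N₀ + k) - c / 2) := h1
        _ ≤ max B (x N₀ - (k + 1 : ℕ) * (c / 2)) := h2
  obtain ⟨k₀, hk₀⟩ := exists_nat_ge ((x N₀ - B) / (c / 2))
  have hxN₁ : x (N₀ + k₀) ≤ B := by
    have h1 := hchain k₀
    have h2 : x N₀ - k₀ * (c / 2) ≤ B := by
      rw [div_le_iff₀ (by linarith)] at hk₀
      linarith
    calc x (N₀ + k₀) ≤ max B (x N₀ - k₀ * (c/2)) := h1
      _ ≤ B := max_le le_rfl h2
  set N₁ : ℕ := N₀ + k₀ with hN₁def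
  have hallB : ∀ n ≥ N₁, x n ≤ B := by
    intro n hn
    induction n, hn using Nat.le_induction with
    | base => exact hxN₁
    | succ n hn ih => exact hBinv n (by omega) ih
  -- upper invariance: below 2K - ε₀ stays
  have hUinv : ∀ n ≥ N₁, x n ≤ 2 * K - ε₀ → x (n + 1) ≤ 2 * K - ε₀ := by
    intro n hn hxu
    have hn0 : N₀ ≤ n := by omega
    rcases lt_or_ge (x n) (K + ε₀) with hcase | hcase
    · have hf1 : f (x n) ≤ (1 + lam) * K := by
        rcases le_or_gt (x n) K with h | h
        · exact hfupK (x n) (hxnn n) h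
        · have := habove (x n) h
          linarith
      have h1 := hstepup n hn0
      have h2 : max (f (x n) + g₀) 0 ≤ 2 * K - ε₀ := by
        apply max_le _ (by linarith)
        linarith
      linarith
    · have hf1 : f (x n) ≤ x n - δ := hδdec (x n) hcase (hallB n hn)
      have h1 := hstepup n hn0
      have h2 : max (f (x n) + g₀) 0 ≤ 2 * K - ε₀ :=
        max_le (by linarith) (by linarith)
      linarith
  -- descent from B to below 2K - ε₀
  have hchain2 : ∀ k : ℕ, x (N₁ + k) ≤ max (2 * K - ε₀) (B - k * (δ / 2)) := by
    intro k
    induction k with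
    | zero =>
      simp only [Nat.add_zero, Nat.cast_zero, zero_mul, sub_zero]
      exact le_trans hxN₁ (le_max_right _ _)
    | succ k ih =>
      have heq : N₁ + (k + 1) = (N₁ + k) + 1 := by ring_nf
      rw [heq]
      rcases le_or_gt (x (N₁ + k)) (2 * K - ε₀) with h | h
      · exact le_trans (hUinv (N₁ + k) (by omega) h) (le_max_left _ _)
      · have hxk : x (N₁ + k) ≤ B - k * (δ / 2) := by
          rcases max_cases (2 * K - ε₀) (B - k * (δ/2)) with ⟨he, _⟩ | ⟨he, _⟩
          · rw [he] at ih; linarith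
          · rw [he] at ih; exact ih
        have hKe : K + ε₀ ≤ x (N₁ + k) := by linarith
        have hf1 : f (x (N₁ + k)) ≤ x (N₁ + k) - δ :=
          hδdec _ hKe (hallB _ (by omega))
        have hstep := hstepup (N₁ + k) (by omega)
        have h2 : max (f (x (N₁ + k)) + g₀) 0 ≤
            max (2 * K - ε₀) (B - (k + 1 : ℕ) * (δ/2)) := by
          apply max_le
          · refine le_trans (show f (x (N₁ + k)) + g₀ ≤ B - (k + 1 : ℕ) * (δ/2) from ?_)
              (le_max_right _ _)
            push_cast
            linarith
          · exact le_trans (by linarith) (le_max_left _ _)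
        exact le_trans hstep h2
  obtain ⟨k₁, hk₁⟩ := exists_nat_ge ((B - (2 * K - ε₀)) / (δ / 2))
  set N₂ : ℕ := N₁ + k₁ with hN₂def
  have hallU : ∀ n ≥ N₂, x n ≤ 2 * K - ε₀ := by
    have hbase : x N₂ ≤ 2 * K - ε₀ := by
      have h1 := hchain2 k₁
      have h2 : B - k₁ * (δ / 2) ≤ 2 * K - ε₀ := by
        rw [div_le_iff₀ (by linarith)] at hk₁
        linarith
      calc x N₂ ≤ max (2*K - ε₀) (B - k₁ * (δ/2)) := h1
        _ ≤ 2 * K - ε₀ := max_le le_rfl h2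
    intro n hn
    induction n, hn using Nat.le_induction with
    | base => exact hbase
    | succ n hn ih => exact hUinv n (by omega) ih
  -- entry: some n₀ ≥ N₂ with σ₁/2 < x n₀
  have hfreq : ∃ᶠ n in Filter.atTop, σ₁ / 2 < x n := by
    apply Filter.frequently_lt_of_lt_limsup
    · exact Filter.isCoboundedUnder_le_of_le Filter.atTop hxnn
    · linarith
  obtain ⟨n₀, hn₀x, hn₀N₂⟩ :=
    (hfreq.and_eventually (Filter.eventually_ge_atTop N₂)).exists
  -- full invariance of [ε₀, 2K-ε₀]
  have hinv : ∀ n ≥ N₂, x n ∈ Set.Icc ε₀ (2 * K - ε₀) →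
      x (n + 1) ∈ Set.Icc ε₀ (2 * K - ε₀) := by
    intro n hn hmem
    obtain ⟨hxl, hxu⟩ := hmem
    refine ⟨?_, hUinv n (by omega) hxu⟩
    have hn0 : N₀ ≤ n := by omega
    have hsd := hstepdown n hn0
    rcases le_or_gt (x n) K with h | h
    · have := hμle (x n) hxl h
      linarith
    · have := hflow2 (x n) h hxu
      linarith
  refine ⟨ε₀, hε₀pos, hε₀lt, n₀, ?_⟩
  have hbase : x n₀ ∈ Set.Icc ε₀ (2 * K - ε₀) := by
    refine ⟨?_, hallU n₀ hn₀N₂⟩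
    linarith
  intro n hn
  induction n, hn using Nat.le_induction with
  | base => exact hbase
  | succ n hn ih => exact hinv n (by omega) ih
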